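/- Let (F, ‖·‖) be a proper, positively polarizable hyperbolically normed cone such that: (i) ‖v‖ < ∞ for all v; (ii) there exists t ∈ F with ‖t‖ > 0; (iii) whenever ‖u+v‖ = ‖u‖+‖v‖ for u,v ∈ F, then u and v are linearly dependent in F. Then the symmetric bilinear form ⟨·,·⟩ induced on span(F) by ‖·‖ is nondegenerate. -/
import Mathlib


/-- A linear cone over `ℝ`: a commutative cancellative monoid with scalar
multiplication by real numbers, subject to the usual axioms for nonnegative scalars. -/
class RealLinearCone (F : Type*) [AddCancelCommMonoid F] where
  csmul : ℝ → F → F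
  csmul_add : ∀ {a : ℝ}, 0 ≤ a → ∀ v w : F, csmul a (v + w) = csmul a v + csmul a w
  add_csmul : ∀ {a b : ℝ}, 0 ≤ a → 0 ≤ b → ∀ v : F, csmul (a + b) v = csmul a v + csmul b v
  mul_csmul : ∀ {a b : ℝ}, 0 ≤ a → 0 ≤ b → ∀ v : F, csmul a (csmul b v) = csmul (a * b) v
  one_csmul : ∀ v : F, csmul 1 v = v

/-- The pairing induced by a (finite-valued) hyperbolic norm via polarization:
`⟨v,w⟩ = ½(‖v+w‖² - ‖v‖² - ‖w‖²)`. -/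
noncomputable def hInner {F : Type*} [AddCancelCommMonoid F] (nn : F → ℝ) (v w : F) : ℝ :=
  ((nn (v + w)) ^ 2 - (nn v) ^ 2 - (nn w) ^ 2) / 2

/-- If the hyperbolic norm on a proper cone `F` is finite, positively
polarizable, non-trivial and strictly hyperbolic, then the symmetric bilinear form `B`
on the span `V` of `F` which extends the induced pairing is nondegenerate.
Here `(V, ι, B)` is an abstract presentation of the span: `ι` is additive, compatible
with nonnegative scalar multiplication, injective, and its image generates `V`. -/
theorem hInner_span_nondegenerate {F : Type*} [AddCancelCommMonoid F] [RealLinearCone F]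
    (nn : F → ℝ)
    (hproper : ∀ v w : F, v + w = 0 → v = 0)
    (hnonneg : ∀ v : F, 0 ≤ nn v)
    (hrev : ∀ v w : F, nn v + nn w ≤ nn (v + w))
    (hhom : ∀ a : ℝ, 0 ≤ a → ∀ v : F, nn (RealLinearCone.csmul a v) = a * nn v)
    (hpol : ∀ v w : F, (nn (v + RealLinearCone.csmul 2 w)) ^ 2 + (nn v) ^ 2
      = 2 * (nn (v + w)) ^ 2 + 2 * (nn w) ^ 2)
    (hnontrivial : ∃ t : F, 0 < nn t)
    (hstrict : ∀ u v : F, nn (u + v) = nn u + nn v →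
      ∃ lam : ℝ, 0 ≤ lam ∧ (u = RealLinearCone.csmul lam v ∨ v = RealLinearCone.csmul lam u))
    {V : Type*} [AddCommGroup V] [Module ℝ V] (ι : F → V)
    (hι_inj : Function.Injective ι)
    (hι_add : ∀ v w : F, ι (v + w) = ι v + ι w)
    (hι_smul : ∀ a : ℝ, 0 ≤ a → ∀ v : F, ι (RealLinearCone.csmul a v) = a • ι v)
    (hgen : ∀ x : V, ∃ v w : F, x = ι v - ι w)
    (B : V →ₗ[ℝ] V →ₗ[ℝ] ℝ)
    (hsymm : ∀ x y : V, B x y = B y x)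
    (hext : ∀ v w : F, B (ι v) (ι w) = hInner nn v w) :
    ∀ x : V, (∀ y : V, B x y = 0) → x = 0 := by
  -- preliminary cone facts
  have hcs0 : ∀ u : F, RealLinearCone.csmul (0:ℝ) u = 0 := by
    intro u
    have h := RealLinearCone.add_csmul (le_refl (0:ℝ)) (le_refl (0:ℝ)) u
    simp only [add_zero] at h
    have h2 : RealLinearCone.csmul (0:ℝ) u + 0 = RealLinearCone.csmul (0:ℝ) u + RealLinearCone.csmul (0:ℝ) u := by
      rw [add_zero]; exact h
    exact (add_left_cancel h2).symm
  have htwo : ∀ u : F, RealLinearCone.csmul (2:ℝ) u = u + u := by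
    intro u
    have h := RealLinearCone.add_csmul (a := (1:ℝ)) (b := (1:ℝ)) zero_le_one zero_le_one u
    norm_num [RealLinearCone.one_csmul] at h
    exact h
  have hself : ∀ u : F, hInner nn u u = nn u ^ 2 := by
    intro u
    have h2 : nn (u + u) = 2 * nn u := by
      rw [← htwo u, hhom 2 (by norm_num) u]
    simp only [hInner, h2]
    ring
  have hι0 : ι 0 = 0 := by
    have h := hι_add 0 0
    simp only [add_zero] at h
    nth_rewrite 1 [← add_zero (ι 0)] at h
    exact (add_left_cancel h.symm)
  -- key: if B (ι u) vanishes identically then u = 0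
  have hkey : ∀ u : F, (∀ y : V, B (ι u) y = 0) → u = 0 := by
    intro u hu
    have hnu : nn u = 0 := by
      have h := hu (ι u)
      rw [hext, hself] at h
      exact pow_eq_zero_iff (n := 2) (by norm_num) |>.mp h
    obtain ⟨t, ht⟩ := hnontrivial
    have h := hu (ι t)
    rw [hext] at h
    have hsum : nn (u + t) = nn u + nn t := by
      have hsq : nn (u + t) ^ 2 = nn t ^ 2 := by
        simp only [hInner, hnu] at h ⊢
        nlinarith [h]
      have h' : nn (u + t) = nn t := by
        nlinarith [hnonneg (u+t), hnonneg t, hsq]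
      rw [h', hnu, zero_add]
    obtain ⟨lam, hlam, hcase⟩ := hstrict u t hsum
    rcases hcase with hc | hc
    · have : nn u = lam * nn t := by rw [hc, hhom lam hlam]
      have hlam0 : lam = 0 := by
        rcases mul_eq_zero.mp (hnu ▸ this.symm) with h' | h'
        · exact h'
        · exact absurd h' (ne_of_gt ht)
      rw [hc, hlam0, hcs0]
    · have : nn t = lam * nn u := by rw [hc, hhom lam hlam]
      rw [hnu, mul_zero] at this
      exact absurd this (ne_of_gt ht)
  -- main argument
  intro x hx
  obtain ⟨v, w, rfl⟩ := hgen x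
  have hBeq : ∀ y : V, B (ι v) y = B (ι w) y := by
    intro y
    have := hx y
    rw [map_sub, LinearMap.sub_apply, sub_eq_zero] at this
    exact this
  set a := nn v with ha
  set b := nn w with hb
  set s := nn (v + w) with hs
  have h1 : a ^ 2 = (s ^ 2 - b ^ 2 - a ^ 2) / 2 := by
    have := hBeq (ι v)
    rw [hext, hext, hself] at this
    simpa [hInner, add_comm w v] using this
  have h2 : (s ^ 2 - a ^ 2 - b ^ 2) / 2 = b ^ 2 := by
    have := hBeq (ι w)
    rw [hext, hext, hself] at this
    simpa [hInner] using this
  have hab : a = b := by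
    nlinarith [hnonneg v, hnonneg w]
  have hseq : s = a + b := by
    have hs2 : s ^ 2 = (a + b) ^ 2 := by nlinarith
    nlinarith [hnonneg (v + w), hnonneg v, hnonneg w]
  obtain ⟨lam, hlam, hcase⟩ := hstrict v w hseq
  -- a helper closing each case
  have hclose : ∀ p q : F, p = RealLinearCone.csmul lam q →
      (∀ y : V, B (ι p) y = B (ι q) y) → ι p = ι q := by
    intro p q hpq hBpq
    by_cases h1 : lam = 1
    · rw [hpq, h1, RealLinearCone.one_csmul]
    · have hB0 : ∀ y : V, B (ι q) y = 0 := by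
        intro y
        have := hBpq y
        rw [hpq, hι_smul lam hlam, map_smul, LinearMap.smul_apply, smul_eq_mul] at this
        have : (lam - 1) * B (ι q) y = 0 := by linarith
        rcases mul_eq_zero.mp this with h' | h'
        · exact absurd (by linarith : lam = 1) h1
        · exact h'
      have hq0 : q = 0 := hkey q hB0
      have hp0 : p = 0 := by
        rw [hpq, hq0]
        have h := RealLinearCone.csmul_add hlam (0:F) 0
        simp only [add_zero] at h
        nth_rewrite 1 [← add_zero (RealLinearCone.csmul lam (0:F))] at h
        exact add_left_cancel h.symm
      rw [hp0, hq0]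
  rcases hcase with hc | hc
  · rw [hclose v w hc hBeq, sub_self]
  · rw [← hclose w v hc (fun y => (hBeq y).symm), sub_self]
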